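/- There is a constant K such that for any p = p(n) ∈ (0,1), with high probability the random graph G = G(n,p) satisfies: for every real κ > K p^{-1} log n and all disjoint nonempty vertex subsets S, T with |S| ≤ min{κ, |T|}, one has |∇(S,T)| ≤ 2|T|κp and |G[S]| ≤ |S|κp. -/

import Mathlib

open Filter

/-- The number of edges of a graph. -/
noncomputable def edgeCount {V : Type*} (G : SimpleGraph V) : ℕ := G.edgeSet.ncard

open Classical in
/-- The probability, in the Erdős–Rényi model `G(n,p)`, of the set of graphs
satisfying the property `P`. -/
noncomputable def erProb (n : ℕ) (p : ℝ) (P : SimpleGraph (Fin n) → Prop) : ℝ :=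
  ∑ G : SimpleGraph (Fin n),
    if P G then p ^ edgeCount G * (1 - p) ^ (n.choose 2 - edgeCount G) else 0

/-- `∇(S,T)`: the number of edges of `G` with one endpoint in `S` and one in `T`
(for disjoint `S`, `T`). -/
noncomputable def nablaCount {V : Type*} (G : SimpleGraph V) (S T : Set V) : ℕ :=
  {e ∈ G.edgeSet | ∃ a ∈ S, ∃ b ∈ T, e = s(a, b)}.ncard

/-- `|G[S]|`: the number of edges of `G` with both endpoints in `S`. -/
noncomputable def edgesInside {V : Type*} (G : SimpleGraph V) (S : Set V) : ℕ :=
  {e ∈ G.edgeSet | ∀ v ∈ e, v ∈ S}.ncard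

/-- `d_S(x)`: the number of neighbors of `x` in `G` lying in `S`. -/
noncomputable def degIn {V : Type*} (G : SimpleGraph V) (S : Set V) (x : V) : ℕ :=
  (G.neighborSet x ∩ S).ncard

/-- `d_S(x,y)`: the number of common neighbors of `x` and `y` in `G` lying in `S`. -/
noncomputable def codegIn {V : Type*} (G : SimpleGraph V) (S : Set V) (x y : V) : ℕ :=
  (G.neighborSet x ∩ G.neighborSet y ∩ S).ncard

/-- A cut `(A, Aᶜ)` of the vertex set `Fin n` is balanced if `|A| = (1 ± η) n/2`. -/
def balancedCut (n : ℕ) (η : ℝ) (A : Set (Fin n)) : Prop :=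
  (1 - η) * n / 2 ≤ (A.ncard : ℝ) ∧ (A.ncard : ℝ) ≤ (1 + η) * n / 2

/-- `X(Π) = {x ∈ A : d_B(x) < (1-2ε)np/4}` for the cut `Π = (A, Aᶜ)`. -/
noncomputable def cutX {n : ℕ} (G : SimpleGraph (Fin n)) (ε p : ℝ) (A : Set (Fin n)) :
    Set (Fin n) :=
  {x ∈ A | (degIn G Aᶜ x : ℝ) < (1 - 2 * ε) * n * p / 4}

/-- `T(Π) = {x ∈ A : d_B(x) < (1-ε)np/2}` for the cut `Π = (A, Aᶜ)`. -/
noncomputable def cutT {n : ℕ} (G : SimpleGraph (Fin n)) (ε p : ℝ) (A : Set (Fin n)) :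
    Set (Fin n) :=
  {x ∈ A | (degIn G Aᶜ x : ℝ) < (1 - ε) * n * p / 2}

/-- `Q(Π)` (with `α = 0.8`): the pairs `{x,y} ⊆ A` which either meet `X(Π)` or have
abnormally small co-degree `d_B(x,y)` into `B = Aᶜ`. -/
noncomputable def cutQ {n : ℕ} (G : SimpleGraph (Fin n)) (ε p : ℝ) (A : Set (Fin n)) :
    Set (Sym2 (Fin n)) :=
  {e | ∃ x y : Fin n, x ≠ y ∧ e = s(x, y) ∧ x ∈ A ∧ y ∈ A ∧
    (x ∈ cutX G ε p A ∨ y ∈ cutX G ε p A ∨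
     (x ∉ cutT G ε p A ∧ y ∉ cutT G ε p A ∧ (codegIn G Aᶜ x y : ℝ) < 0.8 * n * p ^ 2 / 2) ∨
     ((x ∈ cutT G ε p A ↔ y ∉ cutT G ε p A) ∧ (codegIn G Aᶜ x y : ℝ) < 0.8 * n * p ^ 2 / 4) ∨
     (x ∈ cutT G ε p A ∧ y ∈ cutT G ε p A ∧ (codegIn G Aᶜ x y : ℝ) < 0.8 * n * p ^ 2 / 8))}

/-- `Q_v(Π)`: the pairs in `Q(Π)` meeting `X(Π)`. -/
noncomputable def cutQv {n : ℕ} (G : SimpleGraph (Fin n)) (ε p : ℝ) (A : Set (Fin n)) :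
    Set (Sym2 (Fin n)) :=
  {e ∈ cutQ G ε p A | ∃ x ∈ cutX G ε p A, x ∈ e}

/-- `Q_e(Π) = Q(Π) ∖ Q_v(Π)`. -/
noncomputable def cutQe {n : ℕ} (G : SimpleGraph (Fin n)) (ε p : ℝ) (A : Set (Fin n)) :
    Set (Sym2 (Fin n)) :=
  cutQ G ε p A \ cutQv G ε p A

/-- `b(G)`: the maximum number of edges of a bipartite subgraph of `G`. -/
noncomputable def maxBip {V : Type*} (G : SimpleGraph V) : ℕ :=
  sSup {m | ∃ F : SimpleGraph V, F ≤ G ∧ F.Colorable 2 ∧ edgeCount F = m}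

/-- `t(G)`: the maximum number of edges of a triangle-free subgraph of `G`. -/
noncomputable def maxTriFree {V : Type*} (G : SimpleGraph V) : ℕ :=
  sSup {m | ∃ F : SimpleGraph V, F ≤ G ∧ F.CliqueFree 3 ∧ edgeCount F = m}

/-- The set of edges of `G` crossing the cut `(A, Aᶜ)`. -/
def cutEdgeSet {V : Type*} (G : SimpleGraph V) (A : Set V) : Set (Sym2 V) :=
  {e ∈ G.edgeSet | ∃ a ∈ A, ∃ b ∈ Aᶜ, e = s(a, b)}

open Finset

open Classical in
lemma sum_graph_transfer {n : ℕ} (f : Finset (Sym2 (Fin n)) → ℝ) :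
    ∑ G : SimpleGraph (Fin n), f G.edgeFinset
      = ∑ s ∈ (⊤ : SimpleGraph (Fin n)).edgeFinset.powerset, f s := by
  refine Finset.sum_bij' (fun G _ => G.edgeFinset)
    (fun s _ => SimpleGraph.fromEdgeSet ↑s) ?_ ?_ ?_ ?_ ?_
  · intro G _
    exact Finset.mem_powerset.2 (SimpleGraph.edgeFinset_mono le_top)
  · intro s _
    exact Finset.mem_univ _
  · intro G _
    simp [SimpleGraph.coe_edgeFinset, SimpleGraph.fromEdgeSet_edgeSet]
  · intro s hs
    have hsub : ∀ e ∈ s, ¬ e.IsDiag := by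
      intro e he
      exact SimpleGraph.not_isDiag_of_mem_edgeFinset (Finset.mem_powerset.1 hs he)
    apply Finset.coe_injective
    rw [SimpleGraph.coe_edgeFinset, SimpleGraph.edgeSet_fromEdgeSet]
    ext e
    simp only [Set.mem_diff, Finset.mem_coe, Set.mem_setOf_eq]
    exact ⟨fun h => h.1, fun h => ⟨h, hsub e h⟩⟩
  · intro G _
    rfl

open Classical in
lemma expSum {n : ℕ} (p : ℝ)
    {C : Finset (Sym2 (Fin n))} (hC : C ⊆ (⊤ : SimpleGraph (Fin n)).edgeFinset) (lam : ℝ) :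
    ∑ G : SimpleGraph (Fin n),
      p ^ G.edgeFinset.card * (1 - p) ^ (n.choose 2 - G.edgeFinset.card)
        * lam ^ ((G.edgeFinset ∩ C).card)
      = (1 - p + p * lam) ^ C.card := by
  set U := (⊤ : SimpleGraph (Fin n)).edgeFinset with hU
  have hUcard : U.card = n.choose 2 := by
    rw [hU, SimpleGraph.card_edgeFinset_top_eq_card_choose_two, Fintype.card_fin]
  rw [sum_graph_transfer (fun s => p ^ s.card * (1 - p) ^ (n.choose 2 - s.card)
        * lam ^ ((s ∩ C).card))]
  have key := Finset.prod_add (fun i => if i ∈ C then p * lam else p) (fun _ => (1 : ℝ) - p) U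
  have hL : ∏ i ∈ U, ((if i ∈ C then p * lam else p) + (1 - p)) = (1 - p + p * lam) ^ C.card := by
    rw [← Finset.prod_filter_mul_prod_filter_not U (· ∈ C)]
    have h1 : U.filter (· ∈ C) = C := by
      ext e; simp only [Finset.mem_filter]
      exact ⟨fun h => h.2, fun h => ⟨hC h, h⟩⟩
    rw [h1]
    have h2 : ∏ i ∈ C, ((if i ∈ C then p * lam else p) + (1 - p)) = (1 - p + p * lam) ^ C.card := by
      rw [Finset.prod_congr rfl (fun i hi => by rw [if_pos hi]), Finset.prod_const]
      ring_nf
    have h3 : ∏ i ∈ U.filter (¬ · ∈ C), ((if i ∈ C then p * lam else p) + (1 - p)) = 1 := by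
      refine Finset.prod_eq_one fun i hi => ?_
      rw [if_neg (Finset.mem_filter.1 hi).2]; ring
    rw [h2, h3, mul_one]
  rw [hL] at key
  rw [← hU, key]
  refine Finset.sum_congr rfl fun s hs => ?_
  have hsU : s ⊆ U := Finset.mem_powerset.1 hs
  have h4 : ∏ i ∈ s, (if i ∈ C then p * lam else p)
      = p ^ s.card * lam ^ ((s ∩ C).card) := by
    rw [← Finset.prod_filter_mul_prod_filter_not s (· ∈ C)]
    have e1 : s.filter (· ∈ C) = s ∩ C := by
      ext e; simp [Finset.mem_filter, Finset.mem_inter]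
    have e2 : ∏ i ∈ s.filter (· ∈ C), (if i ∈ C then p * lam else p) = (p * lam) ^ ((s ∩ C).card) := by
      rw [Finset.prod_congr rfl (fun i hi => if_pos (Finset.mem_filter.1 hi).2),
        Finset.prod_const, e1]
    have e3 : ∏ i ∈ s.filter (¬ · ∈ C), (if i ∈ C then p * lam else p)
        = p ^ (s.card - (s ∩ C).card) := by
      rw [Finset.prod_congr rfl (fun i hi => if_neg (Finset.mem_filter.1 hi).2),
        Finset.prod_const]
      congr 1
      rw [← e1, Finset.filter_not, Finset.card_sdiff_of_subset (Finset.filter_subset _ _)]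
    rw [e2, e3, mul_pow]
    have hle : (s ∩ C).card ≤ s.card := Finset.card_le_card (Finset.inter_subset_left)
    rw [mul_assoc, mul_comm (lam ^ (s ∩ C).card) (p ^ (s.card - (s ∩ C).card)),
      ← mul_assoc, ← pow_add, Nat.add_sub_cancel' hle]
  rw [h4, Finset.prod_const, Finset.card_sdiff_of_subset hsU, hUcard]
  ring

open Classical in
noncomputable def crossFinset (n : ℕ) (S T : Set (Fin n)) : Finset (Sym2 (Fin n)) :=
  (⊤ : SimpleGraph (Fin n)).edgeFinset.filter (fun e => ∃ a ∈ S, ∃ b ∈ T, e = s(a, b))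

open Classical in
noncomputable def insideFinset (n : ℕ) (S : Set (Fin n)) : Finset (Sym2 (Fin n)) :=
  (⊤ : SimpleGraph (Fin n)).edgeFinset.filter (fun e => ¬ e.IsDiag ∧ ∀ v ∈ e, v ∈ S)

open Classical in
lemma nabla_eq {n : ℕ} (G : SimpleGraph (Fin n)) (S T : Set (Fin n)) :
    nablaCount G S T = (G.edgeFinset ∩ crossFinset n S T).card := by
  rw [nablaCount, ← Set.ncard_coe_finset]
  congr 1
  ext e
  simp only [Finset.coe_inter, Set.mem_inter_iff, Set.mem_setOf_eq, Finset.mem_coe,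
    SimpleGraph.mem_edgeFinset, crossFinset, Finset.mem_filter, SimpleGraph.mem_edgeFinset,
    SimpleGraph.edgeSet_top, Set.mem_setOf_eq]
  constructor
  · rintro ⟨he, h⟩
    exact ⟨he, ⟨SimpleGraph.not_isDiag_of_mem_edgeSet G he, h⟩⟩
  · rintro ⟨he, _, h⟩
    exact ⟨he, h⟩

open Classical in
lemma inside_eq {n : ℕ} (G : SimpleGraph (Fin n)) (S : Set (Fin n)) :
    edgesInside G S = (G.edgeFinset ∩ insideFinset n S).card := by
  rw [edgesInside, ← Set.ncard_coe_finset]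
  congr 1
  ext e
  simp only [Finset.coe_inter, Set.mem_inter_iff, Set.mem_setOf_eq, Finset.mem_coe,
    SimpleGraph.mem_edgeFinset, insideFinset, Finset.mem_filter, SimpleGraph.mem_edgeFinset,
    SimpleGraph.edgeSet_top, Set.mem_setOf_eq]
  constructor
  · rintro ⟨he, h⟩
    exact ⟨he, ⟨SimpleGraph.not_isDiag_of_mem_edgeSet G he,
      ⟨SimpleGraph.not_isDiag_of_mem_edgeSet G he, h⟩⟩⟩
  · rintro ⟨he, _, _, h⟩
    exact ⟨he, h⟩

open Classical in
lemma cross_card {n : ℕ} (S T : Set (Fin n)) :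
    ((crossFinset n S T).card : ℝ) ≤ S.ncard * T.ncard := by
  have hS : S.Finite := Set.toFinite S
  have hT : T.Finite := Set.toFinite T
  have hsub : crossFinset n S T ⊆
      Finset.image (fun x : Fin n × Fin n => s(x.1, x.2)) (hS.toFinset ×ˢ hT.toFinset) := by
    intro e he
    obtain ⟨a, ha, b, hb, rfl⟩ := (Finset.mem_filter.1 he).2
    exact Finset.mem_image.2 ⟨(a, b), Finset.mem_product.2
      ⟨hS.mem_toFinset.2 ha, hT.mem_toFinset.2 hb⟩, rfl⟩
  calc ((crossFinset n S T).card : ℝ)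
      ≤ ((hS.toFinset ×ˢ hT.toFinset).card : ℝ) := by
        exact_mod_cast (Finset.card_le_card hsub).trans Finset.card_image_le
    _ = S.ncard * T.ncard := by
        rw [Finset.card_product, Set.ncard_eq_toFinset_card _ hS, Set.ncard_eq_toFinset_card _ hT]
        push_cast; ring

open Classical in
lemma inside_card {n : ℕ} (S : Set (Fin n)) :
    2 * ((insideFinset n S).card : ℝ) ≤ S.ncard * S.ncard := by
  have hS : S.Finite := Set.toFinite S
  set F := hS.toFinset with hF
  set L := (F ×ˢ F).filter (fun x => x.1 < x.2) with hL
  have hsub : insideFinset n S ⊆ Finset.image (fun x : Fin n × Fin n => s(x.1, x.2)) L := by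
    intro e he
    obtain ⟨-, hd, hmem⟩ := Finset.mem_filter.1 he
    induction e with
    | _ a b =>
      have hab : a ≠ b := by simpa using hd
      have haS : a ∈ F := hS.mem_toFinset.2 (hmem a (by simp))
      have hbS : b ∈ F := hS.mem_toFinset.2 (hmem b (by simp))
      rcases lt_or_gt_of_ne hab with h | h
      · exact Finset.mem_image.2 ⟨(a, b), Finset.mem_filter.2
          ⟨Finset.mem_product.2 ⟨haS, hbS⟩, h⟩, rfl⟩
      · exact Finset.mem_image.2 ⟨(b, a), Finset.mem_filter.2
          ⟨Finset.mem_product.2 ⟨hbS, haS⟩, h⟩, Sym2.eq_swap⟩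
  have hhalf : 2 * L.card ≤ F.card * F.card := by
    have hR : L.card = ((F ×ˢ F).filter (fun x => x.2 < x.1)).card := by
      refine Finset.card_bij (fun x _ => x.swap) ?_ ?_ ?_
      · intro x hx
        obtain ⟨hx1, hx2⟩ := Finset.mem_filter.1 hx
        obtain ⟨h1, h2⟩ := Finset.mem_product.1 hx1
        exact Finset.mem_filter.2 ⟨Finset.mem_product.2 ⟨h2, h1⟩, hx2⟩
      · intro x _ y _ h
        exact Prod.swap_injective h
      · intro y hy
        obtain ⟨hy1, hy2⟩ := Finset.mem_filter.1 hy
        obtain ⟨h1, h2⟩ := Finset.mem_product.1 hy1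
        exact ⟨y.swap, Finset.mem_filter.2 ⟨Finset.mem_product.2 ⟨h2, h1⟩, hy2⟩, by simp⟩
    have hdisj : Disjoint L ((F ×ˢ F).filter (fun x => x.2 < x.1)) := by
      rw [Finset.disjoint_left]
      intro x hx hx'
      exact absurd (Finset.mem_filter.1 hx').2 (not_lt_of_gt (Finset.mem_filter.1 hx).2)
    have hunion : L.card + ((F ×ˢ F).filter (fun x => x.2 < x.1)).card ≤ (F ×ˢ F).card := by
      rw [← Finset.card_union_of_disjoint hdisj]
      exact Finset.card_le_card (Finset.union_subset (Finset.filter_subset _ _)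
        (Finset.filter_subset _ _))
    rw [Finset.card_product] at hunion
    omega
  have h1 : (insideFinset n S).card ≤ L.card :=
    (Finset.card_le_card hsub).trans Finset.card_image_le
  have := hhalf
  have h2 : 2 * (insideFinset n S).card ≤ F.card * F.card := by omega
  calc (2 : ℝ) * ((insideFinset n S).card : ℝ) = ((2 * (insideFinset n S).card : ℕ) : ℝ) := by
        push_cast; ring
    _ ≤ ((F.card * F.card : ℕ) : ℝ) := by exact_mod_cast h2
    _ = S.ncard * S.ncard := by rw [Set.ncard_eq_toFinset_card _ hS]; push_cast; ring

open Classical in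
lemma edgeCount_eq {n : ℕ} (G : SimpleGraph (Fin n)) : edgeCount G = G.edgeFinset.card := by
  rw [edgeCount, ← Set.ncard_coe_finset, SimpleGraph.coe_edgeFinset]

noncomputable def wt (n : ℕ) (p : ℝ) (G : SimpleGraph (Fin n)) : ℝ :=
  p ^ edgeCount G * (1 - p) ^ (n.choose 2 - edgeCount G)

lemma wt_nonneg {n : ℕ} {p : ℝ} (hp0 : 0 ≤ p) (hp1 : p ≤ 1) (G : SimpleGraph (Fin n)) :
    0 ≤ wt n p G :=
  mul_nonneg (pow_nonneg hp0 _) (pow_nonneg (by linarith) _)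

lemma sum_wt {n : ℕ} (p : ℝ) : ∑ G : SimpleGraph (Fin n), wt n p G = 1 := by
  have h := expSum (n := n) p (C := ∅) (Finset.empty_subset _) 1
  simpa [wt, edgeCount_eq] using h

open Classical in
lemma erProb_eq_sum {n : ℕ} (p : ℝ) (P : SimpleGraph (Fin n) → Prop) :
    erProb n p P = ∑ G : SimpleGraph (Fin n), if P G then wt n p G else 0 := rfl

lemma erProb_nonneg {n : ℕ} {p : ℝ} (hp0 : 0 ≤ p) (hp1 : p ≤ 1) (P : SimpleGraph (Fin n) → Prop) :
    0 ≤ erProb n p P := by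
  rw [erProb_eq_sum]
  refine Finset.sum_nonneg fun G _ => ?_
  split
  · exact wt_nonneg hp0 hp1 G
  · exact le_refl 0

lemma erProb_compl {n : ℕ} (p : ℝ) (P : SimpleGraph (Fin n) → Prop) :
    erProb n p P = 1 - erProb n p (fun G => ¬ P G) := by
  have : erProb n p P + erProb n p (fun G => ¬ P G) = 1 := by
    rw [erProb_eq_sum, erProb_eq_sum, ← Finset.sum_add_distrib]
    rw [← sum_wt (n := n) p]
    refine Finset.sum_congr rfl fun G _ => ?_
    by_cases h : P G <;> simp [h]
  linarith

lemma erProb_mono {n : ℕ} {p : ℝ} (hp0 : 0 ≤ p) (hp1 : p ≤ 1)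
    {P Q : SimpleGraph (Fin n) → Prop} (h : ∀ G, P G → Q G) :
    erProb n p P ≤ erProb n p Q := by
  rw [erProb_eq_sum, erProb_eq_sum]
  refine Finset.sum_le_sum fun G _ => ?_
  by_cases hP : P G
  · rw [if_pos hP, if_pos (h G hP)]
  · rw [if_neg hP]
    split
    · exact wt_nonneg hp0 hp1 G
    · exact le_refl 0

lemma erProb_false {n : ℕ} (p : ℝ) : erProb n p (fun _ => False) = 0 := by
  rw [erProb_eq_sum]; simp

open Classical in
lemma erProb_union {n : ℕ} {p : ℝ} (hp0 : 0 ≤ p) (hp1 : p ≤ 1)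
    {ι : Type*} [Fintype ι] (Q : ι → SimpleGraph (Fin n) → Prop) :
    erProb n p (fun G => ∃ i, Q i G) ≤ ∑ i : ι, erProb n p (Q i) := by
  rw [erProb_eq_sum]
  have h1 : ∀ G : SimpleGraph (Fin n),
      (@ite ℝ (∃ i, Q i G) (Classical.propDecidable _) (wt n p G) 0)
        ≤ ∑ i : ι, if Q i G then wt n p G else 0 := by
    intro G
    by_cases h : ∃ i, Q i G
    · obtain ⟨i, hi⟩ := h
      rw [if_pos ⟨i, hi⟩]
      calc wt n p G = (if Q i G then wt n p G else 0) := by rw [if_pos hi]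
        _ ≤ ∑ j : ι, if Q j G then wt n p G else 0 := by
            refine Finset.single_le_sum (f := fun j => if Q j G then wt n p G else 0)
              (fun j _ => ?_) (Finset.mem_univ i)
            split
            · exact wt_nonneg hp0 hp1 G
            · exact le_refl 0
    · rw [if_neg h]
      refine Finset.sum_nonneg fun j _ => ?_
      split
      · exact wt_nonneg hp0 hp1 G
      · exact le_refl 0
  refine le_trans (Finset.sum_le_sum fun G _ => h1 G) ?_
  rw [Finset.sum_comm]
  exact le_of_eq (Finset.sum_congr rfl fun i _ => (erProb_eq_sum p (Q i)).symm)

open Classical in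
lemma chernoff {n : ℕ} {p : ℝ} (hp0 : 0 ≤ p) (hp1 : p ≤ 1)
    {C : Finset (Sym2 (Fin n))} (hC : C ⊆ (⊤ : SimpleGraph (Fin n)).edgeFinset) (b : ℝ) :
    erProb n p (fun G => b < ((G.edgeFinset ∩ C).card : ℝ))
      ≤ Real.exp ((Real.exp 1 - 1) * p * C.card - b) := by
  have hstep : erProb n p (fun G => b < ((G.edgeFinset ∩ C).card : ℝ))
      ≤ Real.exp (-b) * (1 - p + p * Real.exp 1) ^ C.card := by
    rw [erProb_eq_sum, ← expSum (n := n) p hC (Real.exp 1), Finset.mul_sum]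
    refine Finset.sum_le_sum fun G _ => ?_
    have hwt : wt n p G = p ^ G.edgeFinset.card * (1 - p) ^ (n.choose 2 - G.edgeFinset.card) := by
      rw [wt, edgeCount_eq]
    have hw0 : 0 ≤ wt n p G := wt_nonneg hp0 hp1 G
    by_cases h : b < ((G.edgeFinset ∩ C).card : ℝ)
    · rw [if_pos h, ← hwt]
      have h2 : (1 : ℝ) ≤ Real.exp (-b) * Real.exp 1 ^ ((G.edgeFinset ∩ C).card) := by
        rw [← Real.exp_nat_mul, ← Real.exp_add]
        refine Real.one_le_exp ?_
        have : (0 : ℝ) < ((G.edgeFinset ∩ C).card : ℝ) - b := by linarith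
        nlinarith [Real.exp_pos 1]
      calc wt n p G = wt n p G * 1 := (mul_one _).symm
        _ ≤ wt n p G * (Real.exp (-b) * Real.exp 1 ^ ((G.edgeFinset ∩ C).card)) :=
            mul_le_mul_of_nonneg_left h2 hw0
        _ = Real.exp (-b) * (wt n p G * Real.exp 1 ^ ((G.edgeFinset ∩ C).card)) := by ring
    · rw [if_neg h, ← hwt]
      positivity
  refine hstep.trans ?_
  have hbase : (0 : ℝ) ≤ 1 - p + p * Real.exp 1 := by
    nlinarith [Real.exp_pos 1, Real.exp_one_gt_d9]
  have hbase2 : 1 - p + p * Real.exp 1 ≤ Real.exp ((Real.exp 1 - 1) * p) := by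
    have := Real.add_one_le_exp ((Real.exp 1 - 1) * p)
    linarith
  calc Real.exp (-b) * (1 - p + p * Real.exp 1) ^ C.card
      ≤ Real.exp (-b) * Real.exp ((Real.exp 1 - 1) * p) ^ C.card := by
        refine mul_le_mul_of_nonneg_left (pow_le_pow_left₀ hbase hbase2 _) (Real.exp_pos _).le
    _ = Real.exp ((Real.exp 1 - 1) * p * C.card - b) := by
        rw [← Real.exp_nat_mul, ← Real.exp_add]
        congr 1
        ring

noncomputable def thr (n : ℕ) (p : ℝ) (S : Set (Fin n)) : ℝ :=
  max (S.ncard * p) (100 * Real.log n)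

lemma erProb_or {n : ℕ} {p : ℝ} (hp0 : 0 ≤ p) (hp1 : p ≤ 1)
    (P Q : SimpleGraph (Fin n) → Prop) :
    erProb n p (fun G => P G ∨ Q G) ≤ erProb n p P + erProb n p Q := by
  have h := erProb_union hp0 hp1 (ι := Bool) (fun b G => if b then P G else Q G)
  have h2 : erProb n p (fun G => P G ∨ Q G)
      ≤ erProb n p (fun G => ∃ i : Bool, if i then P G else Q G) := by
    refine erProb_mono hp0 hp1 fun G hG => ?_
    rcases hG with h | h
    · exact ⟨true, h⟩
    · exact ⟨false, h⟩
  refine h2.trans (h.trans ?_)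
  rw [Fintype.sum_bool]
  simp

open Classical in
lemma perpair_cross {n : ℕ} {p : ℝ} (hp0 : 0 ≤ p) (hp1 : p ≤ 1) (S T : Set (Fin n))
    (hST : S.ncard ≤ T.ncard) :
    erProb n p (fun G => 2 * T.ncard * thr n p S < (nablaCount G S T : ℝ))
      ≤ Real.exp (-(14 * (S.ncard + T.ncard) * Real.log n)) := by
  set L := Real.log n with hL
  have hL0 : 0 ≤ L := Real.log_natCast_nonneg n
  set s := (S.ncard : ℝ) with hs
  set t := (T.ncard : ℝ) with ht
  have hs0 : 0 ≤ s := Nat.cast_nonneg _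
  have ht0 : 0 ≤ t := Nat.cast_nonneg _
  have hst : s ≤ t := Nat.cast_le.2 hST
  set M := thr n p S with hM
  have hM1 : s * p ≤ M := le_max_left _ _
  have hM2 : 100 * L ≤ M := le_max_right _ _
  have hM0 : 0 ≤ M := le_trans (by positivity) hM2
  have h1 : erProb n p (fun G => 2 * t * M < (nablaCount G S T : ℝ))
      ≤ Real.exp ((Real.exp 1 - 1) * p * (crossFinset n S T).card - 2 * t * M) := by
    refine (erProb_mono hp0 hp1 fun G hG => ?_).trans
      (chernoff hp0 hp1 (Finset.filter_subset _ _) (2 * t * M))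
    rwa [nabla_eq] at hG
  refine h1.trans (Real.exp_le_exp.2 ?_)
  have hE : Real.exp 1 ≤ 2.7182818286 := (Real.exp_one_lt_d9).le
  have hE1 : 0 ≤ Real.exp 1 - 1 := by nlinarith [Real.exp_pos 1, Real.add_one_le_exp (1:ℝ)]
  have hm : ((crossFinset n S T).card : ℝ) ≤ s * t := cross_card S T
  have hpm : p * ((crossFinset n S T).card : ℝ) ≤ t * M := by
    calc p * ((crossFinset n S T).card : ℝ) ≤ p * (s * t) := by
          exact mul_le_mul_of_nonneg_left hm hp0
      _ = t * (s * p) := by ring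
      _ ≤ t * M := mul_le_mul_of_nonneg_left hM1 ht0
  have step1 : (Real.exp 1 - 1) * p * (crossFinset n S T).card - 2 * t * M
      ≤ (Real.exp 1 - 3) * (t * M) := by
    have : (Real.exp 1 - 1) * (p * ((crossFinset n S T).card : ℝ))
        ≤ (Real.exp 1 - 1) * (t * M) := mul_le_mul_of_nonneg_left hpm hE1
    nlinarith
  refine step1.trans ?_
  have h28 : (Real.exp 1 - 3) * (t * M) ≤ -(28 * t * L) := by
    have htM : 100 * (t * L) ≤ t * M := by
      calc 100 * (t * L) = t * (100 * L) := by ring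
        _ ≤ t * M := mul_le_mul_of_nonneg_left hM2 ht0
    have htL : 0 ≤ t * L := mul_nonneg ht0 hL0
    nlinarith
  refine h28.trans ?_
  have : (s + t) * L ≤ 2 * t * L := by nlinarith
  nlinarith

open Classical in
lemma perpair_inside {n : ℕ} {p : ℝ} (hp0 : 0 ≤ p) (hp1 : p ≤ 1) (S : Set (Fin n)) :
    erProb n p (fun G => S.ncard * thr n p S < (edgesInside G S : ℝ))
      ≤ Real.exp (-(14 * S.ncard * Real.log n)) := by
  set L := Real.log n with hL
  have hL0 : 0 ≤ L := Real.log_natCast_nonneg n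
  set s := (S.ncard : ℝ) with hs
  have hs0 : 0 ≤ s := Nat.cast_nonneg _
  set M := thr n p S with hM
  have hM1 : s * p ≤ M := le_max_left _ _
  have hM2 : 100 * L ≤ M := le_max_right _ _
  have hM0 : 0 ≤ M := le_trans (by positivity) hM2
  have h1 : erProb n p (fun G => s * M < (edgesInside G S : ℝ))
      ≤ Real.exp ((Real.exp 1 - 1) * p * (insideFinset n S).card - s * M) := by
    refine (erProb_mono hp0 hp1 fun G hG => ?_).trans
      (chernoff hp0 hp1 (Finset.filter_subset _ _) (s * M))
    rwa [inside_eq] at hG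
  refine h1.trans (Real.exp_le_exp.2 ?_)
  have hE : Real.exp 1 ≤ 2.7182818286 := (Real.exp_one_lt_d9).le
  have hE1 : 0 ≤ Real.exp 1 - 1 := by nlinarith [Real.add_one_le_exp (1:ℝ)]
  have hm : 2 * ((insideFinset n S).card : ℝ) ≤ s * s := inside_card S
  have hpm : 2 * (p * ((insideFinset n S).card : ℝ)) ≤ s * M := by
    calc 2 * (p * ((insideFinset n S).card : ℝ)) = p * (2 * ((insideFinset n S).card : ℝ)) := by
          ring
      _ ≤ p * (s * s) := mul_le_mul_of_nonneg_left hm hp0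
      _ = s * (s * p) := by ring
      _ ≤ s * M := mul_le_mul_of_nonneg_left hM1 hs0
  have hsM : 100 * (s * L) ≤ s * M := by
    calc 100 * (s * L) = s * (100 * L) := by ring
      _ ≤ s * M := mul_le_mul_of_nonneg_left hM2 hs0
  have hsL : 0 ≤ s * L := mul_nonneg hs0 hL0
  nlinarith [mul_le_mul_of_nonneg_left hpm hE1]

noncomputable def xq (n : ℕ) : ℝ := Real.exp (-(14 * Real.log n))

lemma xq_nonneg (n : ℕ) : 0 ≤ xq n := (Real.exp_pos _).le

open Classical in
lemma sum_pow_ncard {n : ℕ} (x : ℝ) :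
    ∑ S : Set (Fin n), x ^ S.ncard = (1 + x) ^ n := by
  rw [← Equiv.sum_comp (Fintype.finsetEquivSet (α := Fin n)) (fun S => x ^ S.ncard)]
  have h1 : ∀ s : Finset (Fin n),
      x ^ (Fintype.finsetEquivSet s : Set (Fin n)).ncard = x ^ s.card := by
    intro s
    rw [Fintype.finsetEquivSet_apply, Set.ncard_coe_finset]
  rw [Fintype.sum_congr _ _ h1]
  have key := Finset.prod_add (fun _ : Fin n => x) (fun _ : Fin n => (1 : ℝ)) Finset.univ
  have key2 : ∑ t ∈ (Finset.univ : Finset (Fin n)).powerset, x ^ t.card = (x + 1) ^ n := by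
    simpa using key.symm
  rw [← Finset.powerset_univ, key2, add_comm]

open Classical in
lemma sum_ne_pow_ncard {n : ℕ} (x : ℝ) :
    ∑ S : Set (Fin n), (if S.Nonempty then x ^ S.ncard else 0) = (1 + x) ^ n - 1 := by
  have h1 : ∀ S : Set (Fin n), (if S.Nonempty then x ^ S.ncard else 0)
      = x ^ S.ncard - (if S = (∅ : Set (Fin n)) then 1 else 0) := by
    intro S
    by_cases h : S.Nonempty
    · rw [if_pos h, if_neg (Set.nonempty_iff_ne_empty.1 h)]; ring
    · rw [if_neg h, if_pos (Set.not_nonempty_iff_eq_empty.1 h),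
        Set.not_nonempty_iff_eq_empty.1 h]
      simp
  rw [Fintype.sum_congr _ _ h1, Finset.sum_sub_distrib, sum_pow_ncard]
  congr 1
  rw [Finset.sum_ite_eq' Finset.univ (∅ : Set (Fin n)) (fun _ => (1:ℝ))]
  simp

open Classical in
lemma badC_bound {n : ℕ} {p : ℝ} (hp0 : 0 ≤ p) (hp1 : p ≤ 1) :
    erProb n p (fun G => ¬ (∀ S T : Set (Fin n), S.Nonempty → T.Nonempty →
        S.ncard ≤ T.ncard → (nablaCount G S T : ℝ) ≤ 2 * T.ncard * thr n p S))
      ≤ ((1 + xq n) ^ n - 1) ^ 2 := by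
  have hstep : erProb n p (fun G => ¬ (∀ S T : Set (Fin n), S.Nonempty → T.Nonempty →
        S.ncard ≤ T.ncard → (nablaCount G S T : ℝ) ≤ 2 * T.ncard * thr n p S))
      ≤ ∑ i : Set (Fin n) × Set (Fin n), erProb n p (fun G =>
          i.1.Nonempty ∧ i.2.Nonempty ∧ i.1.ncard ≤ i.2.ncard ∧
            2 * i.2.ncard * thr n p i.1 < (nablaCount G i.1 i.2 : ℝ)) := by
    refine le_trans (erProb_mono hp0 hp1 ?_) (erProb_union hp0 hp1 _)
    intro G hG
    push_neg at hG
    obtain ⟨S, T, h1, h2, h3, h4⟩ := hG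
    exact ⟨(S, T), h1, h2, h3, h4⟩
  refine hstep.trans ?_
  have hterm : ∀ i : Set (Fin n) × Set (Fin n),
      erProb n p (fun G => i.1.Nonempty ∧ i.2.Nonempty ∧ i.1.ncard ≤ i.2.ncard ∧
          2 * i.2.ncard * thr n p i.1 < (nablaCount G i.1 i.2 : ℝ))
      ≤ (if i.1.Nonempty then xq n ^ i.1.ncard else 0)
        * (if i.2.Nonempty then xq n ^ i.2.ncard else 0) := by
    rintro ⟨S, T⟩
    by_cases hc : S.Nonempty ∧ T.Nonempty ∧ S.ncard ≤ T.ncard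
    · obtain ⟨h1, h2, h3⟩ := hc
      rw [if_pos h1, if_pos h2]
      refine le_trans (erProb_mono hp0 hp1 (fun G hG => hG.2.2.2)) ?_
      refine (perpair_cross hp0 hp1 S T h3).trans ?_
      rw [xq, ← Real.exp_nat_mul, ← Real.exp_nat_mul, ← Real.exp_add]
      refine Real.exp_le_exp.2 (le_of_eq ?_)
      push_cast
      ring
    · have h0 : erProb n p (fun G => S.Nonempty ∧ T.Nonempty ∧ S.ncard ≤ T.ncard ∧
          2 * T.ncard * thr n p S < (nablaCount G S T : ℝ)) ≤ 0 := by
        refine le_of_le_of_eq (erProb_mono hp0 hp1 (Q := fun _ => False) ?_) (erProb_false p)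
        intro G hG
        exact hc ⟨hG.1, hG.2.1, hG.2.2.1⟩
      refine h0.trans ?_
      refine mul_nonneg ?_ ?_ <;> split
      all_goals first
        | exact pow_nonneg (xq_nonneg n) _
        | exact le_refl 0
  refine (Finset.sum_le_sum (fun i _ => hterm i)).trans ?_
  rw [Fintype.sum_prod_type]
  simp_rw [← Finset.mul_sum]
  rw [← Finset.sum_mul]
  rw [sum_ne_pow_ncard (n := n) (xq n)]
  rw [sq]

open Classical in
lemma badI_bound {n : ℕ} {p : ℝ} (hp0 : 0 ≤ p) (hp1 : p ≤ 1) :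
    erProb n p (fun G => ¬ (∀ S : Set (Fin n), S.Nonempty →
        (edgesInside G S : ℝ) ≤ S.ncard * thr n p S))
      ≤ (1 + xq n) ^ n - 1 := by
  have hstep : erProb n p (fun G => ¬ (∀ S : Set (Fin n), S.Nonempty →
        (edgesInside G S : ℝ) ≤ S.ncard * thr n p S))
      ≤ ∑ S : Set (Fin n), erProb n p (fun G =>
          S.Nonempty ∧ S.ncard * thr n p S < (edgesInside G S : ℝ)) := by
    refine le_trans (erProb_mono hp0 hp1 ?_) (erProb_union hp0 hp1 _)
    intro G hG
    push_neg at hG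
    obtain ⟨S, h1, h2⟩ := hG
    exact ⟨S, h1, h2⟩
  refine hstep.trans ?_
  rw [← sum_ne_pow_ncard (n := n) (xq n)]
  refine Finset.sum_le_sum fun S _ => ?_
  by_cases h : S.Nonempty
  · rw [if_pos h]
    refine le_trans (erProb_mono hp0 hp1 (fun G hG => hG.2)) ?_
    refine (perpair_inside hp0 hp1 S).trans ?_
    rw [xq, ← Real.exp_nat_mul]
    refine Real.exp_le_exp.2 (le_of_eq ?_)
    push_cast
    ring
  · rw [if_neg h]
    refine le_of_le_of_eq (erProb_mono hp0 hp1 (Q := fun _ => False) ?_) (erProb_false p)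
    intro G hG
    exact h hG.1

lemma good_implies {n : ℕ} {p : ℝ} (hp : 0 < p) (G : SimpleGraph (Fin n))
    (h1 : ∀ S T : Set (Fin n), S.Nonempty → T.Nonempty → S.ncard ≤ T.ncard →
        (nablaCount G S T : ℝ) ≤ 2 * T.ncard * thr n p S)
    (h2 : ∀ S : Set (Fin n), S.Nonempty → (edgesInside G S : ℝ) ≤ S.ncard * thr n p S) :
    ∀ κ : ℝ, 100 * Real.log n / p < κ →
      ∀ S T : Set (Fin n), Disjoint S T → S.Nonempty → T.Nonempty →
        (S.ncard : ℝ) ≤ κ → S.ncard ≤ T.ncard →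
        (nablaCount G S T : ℝ) ≤ 2 * T.ncard * κ * p ∧
        (edgesInside G S : ℝ) ≤ S.ncard * κ * p := by
  intro κ hκ S T _ hS hT hSκ hST
  have hthr : thr n p S ≤ κ * p := by
    rw [thr, max_le_iff]
    constructor
    · exact mul_le_mul_of_nonneg_right hSκ hp.le
    · rw [div_lt_iff₀ hp] at hκ
      linarith
  constructor
  · refine (h1 S T hS hT hST).trans ?_
    have ht0 : (0 : ℝ) ≤ 2 * T.ncard := by positivity
    calc 2 * (T.ncard : ℝ) * thr n p S ≤ 2 * T.ncard * (κ * p) :=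
          mul_le_mul_of_nonneg_left hthr ht0
      _ = 2 * T.ncard * κ * p := by ring
  · refine (h2 S hS).trans ?_
    have hs0 : (0 : ℝ) ≤ (S.ncard : ℝ) := Nat.cast_nonneg _
    calc (S.ncard : ℝ) * thr n p S ≤ S.ncard * (κ * p) :=
          mul_le_mul_of_nonneg_left hthr hs0
      _ = S.ncard * κ * p := by ring

/-- **Proposition 3.4 of DeMarco–Kahn.** There is a `K` such that w.h.p., for every
`κ > K p⁻¹ log n` and disjoint nonempty `S, T` with `|S| ≤ min{κ, |T|}`, one has
`|∇(S,T)| ≤ 2|T|κp` and `|G[S]| ≤ |S|κp`. -/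
theorem sparse_pair_bound :
    ∃ K : ℝ, ∀ p : ℕ → ℝ, (∀ n : ℕ, 0 < p n ∧ p n < 1) →
      Tendsto (fun n : ℕ => erProb n (p n) (fun G =>
          ∀ κ : ℝ, K * Real.log n / p n < κ →
            ∀ S T : Set (Fin n), Disjoint S T → S.Nonempty → T.Nonempty →
              (S.ncard : ℝ) ≤ κ → S.ncard ≤ T.ncard →
              (nablaCount G S T : ℝ) ≤ 2 * T.ncard * κ * p n ∧
              (edgesInside G S : ℝ) ≤ S.ncard * κ * p n))
        atTop (nhds 1) := by
  refine ⟨100, fun p hp => ?_⟩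
  set u : ℕ → ℝ := fun n => (1 + xq n) ^ n - 1 with hu_def
  set ε : ℕ → ℝ := fun n => u n ^ 2 + u n with hε_def
  have hp0 : ∀ n, 0 ≤ p n := fun n => (hp n).1.le
  have hp1 : ∀ n, p n ≤ 1 := fun n => (hp n).2.le
  have hub : ∀ n, erProb n (p n) (fun G =>
          ∀ κ : ℝ, 100 * Real.log n / p n < κ →
            ∀ S T : Set (Fin n), Disjoint S T → S.Nonempty → T.Nonempty →
              (S.ncard : ℝ) ≤ κ → S.ncard ≤ T.ncard →
              (nablaCount G S T : ℝ) ≤ 2 * T.ncard * κ * p n ∧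
              (edgesInside G S : ℝ) ≤ S.ncard * κ * p n) ≤ 1 := by
    intro n
    rw [erProb_compl]
    have := erProb_nonneg (hp0 n) (hp1 n) (fun G => ¬ (∀ κ : ℝ, 100 * Real.log n / p n < κ →
            ∀ S T : Set (Fin n), Disjoint S T → S.Nonempty → T.Nonempty →
              (S.ncard : ℝ) ≤ κ → S.ncard ≤ T.ncard →
              (nablaCount G S T : ℝ) ≤ 2 * T.ncard * κ * p n ∧
              (edgesInside G S : ℝ) ≤ S.ncard * κ * p n))
    linarith
  have hlb : ∀ n, 1 - ε n ≤ erProb n (p n) (fun G =>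
          ∀ κ : ℝ, 100 * Real.log n / p n < κ →
            ∀ S T : Set (Fin n), Disjoint S T → S.Nonempty → T.Nonempty →
              (S.ncard : ℝ) ≤ κ → S.ncard ≤ T.ncard →
              (nablaCount G S T : ℝ) ≤ 2 * T.ncard * κ * p n ∧
              (edgesInside G S : ℝ) ≤ S.ncard * κ * p n) := by
    intro n
    rw [erProb_compl]
    have hbad : erProb n (p n) (fun G => ¬ (∀ κ : ℝ, 100 * Real.log n / p n < κ →
            ∀ S T : Set (Fin n), Disjoint S T → S.Nonempty → T.Nonempty →
              (S.ncard : ℝ) ≤ κ → S.ncard ≤ T.ncard →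
              (nablaCount G S T : ℝ) ≤ 2 * T.ncard * κ * p n ∧
              (edgesInside G S : ℝ) ≤ S.ncard * κ * p n)) ≤ ε n := by
      have hmono : ∀ G : SimpleGraph (Fin n), (¬ (∀ κ : ℝ, 100 * Real.log n / p n < κ →
            ∀ S T : Set (Fin n), Disjoint S T → S.Nonempty → T.Nonempty →
              (S.ncard : ℝ) ≤ κ → S.ncard ≤ T.ncard →
              (nablaCount G S T : ℝ) ≤ 2 * T.ncard * κ * p n ∧
              (edgesInside G S : ℝ) ≤ S.ncard * κ * p n)) →
          ((¬ (∀ S T : Set (Fin n), S.Nonempty → T.Nonempty →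
              S.ncard ≤ T.ncard → (nablaCount G S T : ℝ) ≤ 2 * T.ncard * thr n (p n) S)) ∨
           (¬ (∀ S : Set (Fin n), S.Nonempty →
              (edgesInside G S : ℝ) ≤ S.ncard * thr n (p n) S))) := by
        intro G hG
        by_contra hcon
        push_neg at hcon
        obtain ⟨h1, h2⟩ := hcon
        exact hG (good_implies (hp n).1 G h1 h2)
      refine le_trans (erProb_mono (hp0 n) (hp1 n) hmono) ?_
      refine le_trans (erProb_or (hp0 n) (hp1 n) _ _) ?_
      exact add_le_add (badC_bound (hp0 n) (hp1 n)) (badI_bound (hp0 n) (hp1 n))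
    linarith
  have hu0 : ∀ n, 0 ≤ u n := by
    intro n
    have h1 : (1 : ℝ) ≤ (1 + xq n) ^ n := by
      refine one_le_pow₀ ?_
      linarith [xq_nonneg n]
    simp only [hu_def]
    linarith
  have huu : ∀ n : ℕ, u n ≤ Real.exp (n * xq n) - 1 := by
    intro n
    have h1 : (1 + xq n) ^ n ≤ Real.exp (xq n) ^ n := by
      refine pow_le_pow_left₀ (by linarith [xq_nonneg n]) ?_ n
      linarith [Real.add_one_le_exp (xq n)]
    rw [← Real.exp_nat_mul] at h1
    simp only [hu_def]
    linarith
  have hv : Tendsto (fun n : ℕ => (n : ℝ) * xq n) atTop (nhds 0) := by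
    have h1 : Tendsto (fun n : ℕ => Real.log n) atTop atTop :=
      Real.tendsto_log_atTop.comp tendsto_natCast_atTop_atTop
    have h2 : Tendsto (fun n : ℕ => -(13 * Real.log n)) atTop atBot := by
      refine tendsto_neg_atBot_iff.2 ?_
      exact h1.const_mul_atTop (by norm_num : (0:ℝ) < 13)
    have h3 : Tendsto (fun n : ℕ => Real.exp (-(13 * Real.log n))) atTop (nhds 0) :=
      Real.tendsto_exp_atBot.comp h2
    refine h3.congr' ?_
    filter_upwards [eventually_ge_atTop 1] with n hn
    have hn0 : (0 : ℝ) < n := by exact_mod_cast hn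
    have hrw : (n:ℝ) * Real.exp (-(14 * Real.log n)) = Real.exp (Real.log n + -(14 * Real.log n)) := by
      rw [Real.exp_add, Real.exp_log hn0]
    rw [xq, hrw]
    congr 1
    ring
  have hexp : Tendsto (fun n : ℕ => Real.exp ((n : ℝ) * xq n) - 1) atTop (nhds 0) := by
    have h4 : Tendsto (fun n : ℕ => Real.exp ((n : ℝ) * xq n)) atTop (nhds 1) := by
      have := (Real.continuous_exp.tendsto 0).comp hv
      simpa [Function.comp_def] using this
    have hc1 : Tendsto (fun _ : ℕ => (1:ℝ)) atTop (nhds 1) := tendsto_const_nhds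
    have := h4.sub hc1
    simpa using this
  have hu : Tendsto u atTop (nhds 0) :=
    tendsto_of_tendsto_of_tendsto_of_le_of_le tendsto_const_nhds hexp hu0 huu
  have hε : Tendsto ε atTop (nhds 0) := by
    have h5 := (hu.mul hu).add hu
    simp only [mul_zero, add_zero, zero_mul] at h5
    refine h5.congr fun n => ?_
    simp [hε_def, sq]
  have hone : Tendsto (fun n : ℕ => 1 - ε n) atTop (nhds 1) := by
    have hc1 : Tendsto (fun _ : ℕ => (1:ℝ)) atTop (nhds 1) := tendsto_const_nhds
    have := hc1.sub hε
    simpa using this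
  exact tendsto_of_tendsto_of_tendsto_of_le_of_le hone tendsto_const_nhds hlb hub
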